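/- The symplectic group Sp_4(ℚ), consisting of 4×4 rational matrices A satisfying Aᵀ·Ω·A = Ω for the standard skew-symmetric form Ω = [[0, I_2], [−I_2, 0]], has infinitely many z-classes. -/

import Mathlib

open scoped Matrix

/-- Two elements are z-equivalent if their centralizers are conjugate. -/
def zEquiv {G : Type*} [Group G] (g₁ g₂ : G) : Prop :=
  ∃ t : G, (Subgroup.centralizer {g₁}).map (MulAut.conj t).toMonoidHom =
    Subgroup.centralizer {g₂}

/-- The set of z-classes of a group. -/
def zClasses (G : Type*) [Group G] : Set (Set G) :=
  Set.range fun g => {h | zEquiv g h}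

/-- The subgroup of `GL_n(k)` preserving the bilinear form given by `J`:
matrices `A` with `Aᵀ * J * A = J`. -/
def formGroup {n : Type*} [Fintype n] [DecidableEq n] {k : Type*} [CommRing k]
    (J : Matrix n n k) : Subgroup (Matrix n n k)ˣ where
  carrier := {A | (A : Matrix n n k)ᵀ * J * (A : Matrix n n k) = J}
  one_mem' := by simp
  mul_mem' := by
    intro a b ha hb
    simp only [Set.mem_setOf_eq] at *
    rw [Units.val_mul, Matrix.transpose_mul]
    calc (b : Matrix n n k)ᵀ * (a : Matrix n n k)ᵀ * J * ((a : Matrix n n k) * b)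
        = (b : Matrix n n k)ᵀ * ((a : Matrix n n k)ᵀ * J * a) * b := by noncomm_ring
      _ = (b : Matrix n n k)ᵀ * J * b := by rw [ha]
      _ = J := hb
  inv_mem' := by
    intro a ha
    simp only [Set.mem_setOf_eq] at *
    calc ((a⁻¹ : (Matrix n n k)ˣ) : Matrix n n k)ᵀ * J * ((a⁻¹ : (Matrix n n k)ˣ) : Matrix n n k)
        = ((a⁻¹ : (Matrix n n k)ˣ) : Matrix n n k)ᵀ * ((a : Matrix n n k)ᵀ * J * a) *
            ((a⁻¹ : (Matrix n n k)ˣ) : Matrix n n k) := by rw [ha]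
      _ = ((a : Matrix n n k) * ((a⁻¹ : (Matrix n n k)ˣ) : Matrix n n k))ᵀ * J *
            ((a : Matrix n n k) * ((a⁻¹ : (Matrix n n k)ˣ) : Matrix n n k)) := by
          rw [Matrix.transpose_mul]; noncomm_ring
      _ = J := by rw [Units.mul_inv]; simp

namespace Sp4Aux

open Matrix

/-! ### Number-theoretic facts -/

lemma rat_sq_ne {n : ℕ} (h : ¬ IsSquare n) (r : ℚ) : r^2 ≠ (n:ℚ) := by
  intro he
  have hirr : Irrational (Real.sqrt n) := irrational_sqrt_natCast_iff.2 h
  have h2 : Real.sqrt n = ((|r| : ℚ) : ℝ) := by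
    rw [show ((n:ℕ):ℝ) = ((r:ℝ))^2 by exact_mod_cast congrArg (fun x : ℚ => (x:ℝ)) he.symm,
      Real.sqrt_sq_eq_abs]
    push_cast; ring
  exact hirr ⟨|r|, h2.symm⟩

lemma not_isSquare_prime {p : ℕ} (hp : p.Prime) : ¬ IsSquare p :=
  irrational_sqrt_natCast_iff.1 hp.irrational_sqrt

lemma not_isSquare_mul {p q : ℕ} (hp : p.Prime) (hq : q.Prime) (hne : p ≠ q) :
    ¬ IsSquare (p * q) := by
  rintro ⟨k, hk⟩
  have hpk : p ∣ k := hp.dvd_of_dvd_pow (n := 2) (by rw [sq, ← hk]; exact ⟨q, rfl⟩)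
  obtain ⟨m, rfl⟩ := hpk
  have hq' : q = p * m ^ 2 := by
    have : p * q = p * (p * m ^ 2) := by rw [hk]; ring
    exact Nat.eq_of_mul_eq_mul_left hp.pos this
  rcases (hq.eq_one_or_self_of_dvd p ⟨m^2, hq'⟩) with h | h
  · exact hp.ne_one h
  · exact hne h

/-! ### Core arithmetic contradiction -/

lemma arith {P Q : ℕ} (hP : P.Prime) (hQ : Q.Prime) (hne : P ≠ Q) (a b c d : ℚ)
    (h1 : a + c = 0)
    (h2 : (a^2 + Q*b^2) + (c^2 + (Q:ℚ)⁻¹*d^2) = P + (P:ℚ)⁻¹)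
    (h3 : (a^3 + 3*Q*a*b^2) + (c^3 + 3*(Q:ℚ)⁻¹*c*d^2) = 0)
    (h5 : (a^2 - Q*b^2) * (c^2 - (Q:ℚ)⁻¹*d^2) = 1) : False := by
  have hP0 : (P:ℚ) ≠ 0 := Nat.cast_ne_zero.2 hP.ne_zero
  have hPP : (P:ℚ) * (P:ℚ)⁻¹ = 1 := mul_inv_cancel₀ hP0
  have hP2 : (2:ℚ) ≤ P := by exact_mod_cast hP.two_le
  have hc : c = -a := by linarith
  subst hc
  set u := (Q:ℚ)*b^2 with hu_def
  set v := (Q:ℚ)⁻¹*d^2 with hv_def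
  have hau : a*(u - v) = 0 := by linear_combination h3/3
  rcases mul_eq_zero.1 hau with ha | huv
  · have h2' : u + v = P + (P:ℚ)⁻¹ := by rw [ha] at h2; linear_combination h2
    have h5' : u * v = 1 := by rw [ha] at h5; linear_combination h5
    have : (u - P) * (u - (P:ℚ)⁻¹) = 0 := by linear_combination u*h2' - h5' + hPP
    rcases mul_eq_zero.1 this with hu | hu
    · have hu : u = (P:ℚ) := by linarith
      exact rat_sq_ne (not_isSquare_mul hQ hP (Ne.symm hne)) ((Q:ℚ)*b)
        (by push_cast; linear_combination (Q:ℚ) * hu)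
    · have hu : u = (P:ℚ)⁻¹ := by linarith
      exact rat_sq_ne (not_isSquare_mul hP hQ hne) ((P:ℚ)*(Q:ℚ)*b)
        (by push_cast; linear_combination (P:ℚ)^2*(Q:ℚ)*hu + (P:ℚ)*(Q:ℚ)*hPP)
  · have huv' : u = v := by linarith [sub_eq_zero.1 huv]
    rw [← huv'] at h2 h5
    have h2' : 2*a^2 + 2*u = P + (P:ℚ)⁻¹ := by linear_combination h2
    have h5' : (a^2 - u - 1) * (a^2 - u + 1) = 0 := by linear_combination h5
    rcases mul_eq_zero.1 h5' with he | he
    · have h4a : 4*a^2 = P + (P:ℚ)⁻¹ + 2 := by linarith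
      have hP1 : (P:ℚ) + 1 ≠ 0 := by linarith
      refine rat_sq_ne (not_isSquare_prime hP) ((2*a*P)/(P+1)) ?_
      rw [div_pow, div_eq_iff (pow_ne_zero 2 hP1)]
      linear_combination (P:ℚ)^2*h4a + (P:ℚ)*hPP
    · have h4a : 4*a^2 = P + (P:ℚ)⁻¹ - 2 := by linarith
      have hP1 : (P:ℚ) - 1 ≠ 0 := by linarith
      refine rat_sq_ne (not_isSquare_prime hP) ((2*a*P)/(P-1)) ?_
      rw [div_pow, div_eq_iff (pow_ne_zero 2 hP1)]
      linear_combination (P:ℚ)^2*h4a + (P:ℚ)*hPP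

/-! ### Matrices -/

abbrev Idx := Fin 2 ⊕ Fin 2

abbrev Om : Matrix Idx Idx ℚ := Matrix.fromBlocks 0 1 (-1) 0

def Amat (r : ℚ) : Matrix Idx Idx ℚ := fromBlocks !![0,r;1,0] 0 0 !![0,r⁻¹;1,0]

def Bmat (r : ℚ) : Matrix Idx Idx ℚ := fromBlocks !![0,1;r⁻¹,0] 0 0 !![0,1;r,0]

lemma AB {r : ℚ} (hr : r ≠ 0) : Amat r * Bmat r = 1 := by
  simp [Amat, Bmat, fromBlocks_multiply, Matrix.mul_fin_two, mul_inv_cancel₀ hr,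
    inv_mul_cancel₀ hr, ← fromBlocks_one, Matrix.one_fin_two]

lemma BA {r : ℚ} (hr : r ≠ 0) : Bmat r * Amat r = 1 := by
  simp [Amat, Bmat, fromBlocks_multiply, Matrix.mul_fin_two, mul_inv_cancel₀ hr,
    inv_mul_cancel₀ hr, ← fromBlocks_one, Matrix.one_fin_two]

def Aunit (r : ℚ) (hr : r ≠ 0) : (Matrix Idx Idx ℚ)ˣ := ⟨Amat r, Bmat r, AB hr, BA hr⟩

lemma tr2 (a b c d : ℚ) : (!![a,b;c,d])ᵀ = !![a,c;b,d] := by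
  ext i j; fin_cases i <;> fin_cases j <;> simp

lemma Amem {r : ℚ} (hr : r ≠ 0) : (Amat r)ᵀ * Om * Amat r = Om := by
  simp only [Amat, fromBlocks_transpose, transpose_zero, tr2]
  simp [fromBlocks_multiply, Matrix.mul_fin_two, mul_inv_cancel₀ hr, inv_mul_cancel₀ hr,
    ← fromBlocks_one, Matrix.one_fin_two]

/-- Block form of a matrix commuting with `Amat r`. -/
def Wm (r a b c d : ℚ) : Matrix Idx Idx ℚ :=
  fromBlocks !![a, r*b; b, a] 0 0 !![c, r⁻¹*d; d, c]

set_option maxHeartbeats 1000000 in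
lemma comm_block {r : ℚ} (hr : r ≠ 0) (hr2 : r^2 ≠ 1) (Z : Matrix Idx Idx ℚ)
    (hZ : Amat r * Z = Z * Amat r) :
    Z = Wm r (Z (.inl 0) (.inl 0)) (Z (.inl 1) (.inl 0))
            (Z (.inr 0) (.inr 0)) (Z (.inr 1) (.inr 0)) := by
  have hrr : r * r - 1 ≠ 0 := fun hx => hr2 (by nlinarith)
  have h := fun i j => congrFun (congrFun hZ i) j
  have E1 := h (.inl 0) (.inr 0)
  have E2 := h (.inl 1) (.inr 1)
  have E3 := h (.inl 0) (.inr 1)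
  have E4 := h (.inl 1) (.inr 0)
  have E5 := h (.inr 0) (.inl 0)
  have E6 := h (.inr 1) (.inl 1)
  have E7 := h (.inr 0) (.inl 1)
  have E8 := h (.inr 1) (.inl 0)
  have E9 := h (.inl 0) (.inl 0)
  have E10 := h (.inl 1) (.inl 0)
  have E11 := h (.inr 0) (.inr 0)
  have E12 := h (.inr 1) (.inr 0)
  simp [Amat, Matrix.mul_apply, Fintype.sum_sum_type, Fin.sum_univ_two]
    at E1 E2 E3 E4 E5 E6 E7 E8 E9 E10 E11 E12
  field_simp at E2 E3 E5 E6 E7 E11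
  have hz23 : Z (.inl 1) (.inr 0) = 0 := by
    have h0 : (r*r - 1) * Z (.inl 1) (.inr 0) = 0 := by linear_combination r*E1 + E2
    exact (mul_eq_zero.1 h0).resolve_left hrr
  have hz14 : Z (.inl 0) (.inr 1) = 0 := by rw [← E1, hz23, mul_zero]
  have hz24 : Z (.inl 1) (.inr 1) = 0 := by
    have h0 : (r*r - 1) * Z (.inl 1) (.inr 1) = 0 := by linear_combination E3 + E4
    exact (mul_eq_zero.1 h0).resolve_left hrr
  have hz13 : Z (.inl 0) (.inr 0) = 0 := by rw [E4, hz24]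
  have hz41 : Z (.inr 1) (.inl 0) = 0 := by
    have h0 : (r*r - 1) * Z (.inr 1) (.inl 0) = 0 := by linear_combination -E5 - r*E6
    exact (mul_eq_zero.1 h0).resolve_left hrr
  have hz32 : Z (.inr 0) (.inl 1) = 0 := by rw [E6, hz41, mul_zero]
  have hz31 : Z (.inr 0) (.inl 0) = 0 := by
    have h0 : (r*r - 1) * Z (.inr 0) (.inl 0) = 0 := by linear_combination -E8 - E7
    exact (mul_eq_zero.1 h0).resolve_left hrr
  have hz42 : Z (.inr 1) (.inl 1) = 0 := by rw [← E8, hz31]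
  ext i j
  rcases i with i | i <;> rcases j with j | j <;> fin_cases i <;> fin_cases j <;>
    simp [Wm, fromBlocks, hz23, hz14, hz24, hz13, hz41, hz32, hz31, hz42]
  · linear_combination -E9
  · exact E10.symm
  · rw [eq_comm, inv_mul_eq_iff_eq_mul₀ hr]; linear_combination E11
  · exact E12.symm

/-! ### Traces and determinants -/

lemma trW (r a b c d : ℚ) : trace (Wm r a b c d) = (a + a) + (c + c) := by
  simp [Wm, Matrix.trace, Matrix.diag, Fintype.sum_sum_type, Fin.sum_univ_two]

lemma trW2 (r a b c d : ℚ) : trace (Wm r a b c d * Wm r a b c d) =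
    2*(a^2 + r*b^2) + 2*(c^2 + r⁻¹*d^2) := by
  simp [Wm, fromBlocks_multiply, Matrix.mul_fin_two, Matrix.trace, Matrix.diag,
    Fintype.sum_sum_type, Fin.sum_univ_two]
  ring

lemma trW3 (r a b c d : ℚ) : trace (Wm r a b c d * Wm r a b c d * Wm r a b c d) =
    2*(a^3 + 3*r*a*b^2) + 2*(c^3 + 3*r⁻¹*c*d^2) := by
  simp [Wm, fromBlocks_multiply, Matrix.mul_fin_two, Matrix.trace, Matrix.diag,
    Fintype.sum_sum_type, Fin.sum_univ_two]
  ring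

lemma detW (r a b c d : ℚ) : det (Wm r a b c d) = (a^2 - r*b^2) * (c^2 - r⁻¹*d^2) := by
  simp [Wm, det_fromBlocks_zero₂₁, Matrix.det_fin_two_of]
  ring

lemma trA (r : ℚ) : trace (Amat r) = 0 := by
  simp [Amat, Matrix.trace, Matrix.diag, Fintype.sum_sum_type, Fin.sum_univ_two]

lemma trA2 (r : ℚ) : trace (Amat r * Amat r) = 2*r + 2*r⁻¹ := by
  simp [Amat, fromBlocks_multiply, Matrix.mul_fin_two, Matrix.trace, Matrix.diag,
    Fintype.sum_sum_type, Fin.sum_univ_two]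
  ring

lemma trA3 (r : ℚ) : trace (Amat r * Amat r * Amat r) = 0 := by
  simp [Amat, fromBlocks_multiply, Matrix.mul_fin_two, Matrix.trace, Matrix.diag,
    Fintype.sum_sum_type, Fin.sum_univ_two]

lemma detA {r : ℚ} (hr : r ≠ 0) : det (Amat r) = 1 := by
  simp [Amat, det_fromBlocks_zero₂₁, Matrix.det_fin_two_of]
  field_simp

/-! ### The group elements -/

abbrev Sp : Type := ↥(formGroup Om)

def gE (r : ℚ) (hr : r ≠ 0) : Sp := ⟨Aunit r hr, Amem hr⟩

lemma prime_cast_ne_zero (p : Nat.Primes) : ((p : ℕ) : ℚ) ≠ 0 :=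
  Nat.cast_ne_zero.2 p.2.ne_zero

def gP (p : Nat.Primes) : Sp := gE ((p : ℕ) : ℚ) (prime_cast_ne_zero p)

/-! ### z-equivalence facts -/

lemma zEquiv_refl {G : Type*} [Group G] (g : G) : zEquiv g g := by
  refine ⟨1, ?_⟩
  ext x
  simp [Subgroup.mem_map, MulAut.conj]

lemma not_zEquiv_gP {p q : Nat.Primes} (hne : (p:ℕ) ≠ (q:ℕ)) :
    ¬ zEquiv (gP p) (gP q) := by
  rintro ⟨t, ht⟩
  -- numeric facts about q
  have hq0 : ((q:ℕ):ℚ) ≠ 0 := prime_cast_ne_zero q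
  have hq2 : ((q:ℕ):ℚ) ≥ 2 := by exact_mod_cast q.2.two_le
  have hqsq : ((q:ℕ):ℚ)^2 ≠ 1 := by nlinarith
  have hp0 : ((p:ℕ):ℚ) ≠ 0 := prime_cast_ne_zero p
  -- the conjugate of gP p centralizes gP q
  have hself : gP p ∈ Subgroup.centralizer {gP p} :=
    Subgroup.mem_centralizer_iff.2 (by rintro h rfl; rfl)
  have hz : (MulAut.conj t) (gP p) ∈ Subgroup.centralizer {gP q} :=
    ht ▸ Subgroup.mem_map_of_mem _ hself
  have hcomm : gP q * ((MulAut.conj t) (gP p)) = ((MulAut.conj t) (gP p)) * gP q :=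
    Subgroup.mem_centralizer_iff.1 hz (gP q) rfl
  -- pass to matrices
  set z : Sp := (MulAut.conj t) (gP p) with hzdef
  set Zm : Matrix Idx Idx ℚ := ((z : (Matrix Idx Idx ℚ)ˣ) : Matrix Idx Idx ℚ) with hZm
  have hMc : Amat ((q:ℕ):ℚ) * Zm = Zm * Amat ((q:ℕ):ℚ) := by
    have := congrArg (fun w : Sp => ((w : (Matrix Idx Idx ℚ)ˣ) : Matrix Idx Idx ℚ)) hcomm
    simpa [Units.val_mul, gP, gE, Aunit] using this
  -- conjugation invariants
  have hzu : (z : (Matrix Idx Idx ℚ)ˣ) =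
      (t : (Matrix Idx Idx ℚ)ˣ) * Aunit ((p:ℕ):ℚ) hp0 * ((t : (Matrix Idx Idx ℚ)ˣ))⁻¹ := by
    rw [hzdef]
    simp [MulAut.conj_apply, gP, gE]
  have hpow : ∀ k : ℕ, Zm ^ k =
      ((t : (Matrix Idx Idx ℚ)ˣ) : Matrix Idx Idx ℚ) * ((Aunit ((p:ℕ):ℚ) hp0 : (Matrix Idx Idx ℚ)ˣ) : Matrix Idx Idx ℚ) ^ k *
      ((((t : (Matrix Idx Idx ℚ)ˣ))⁻¹ : (Matrix Idx Idx ℚ)ˣ) : Matrix Idx Idx ℚ) := by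
    intro k
    rw [hZm, hzu, ← Units.val_pow_eq_pow_val, conj_pow, Units.val_mul, Units.val_mul,
      Units.val_pow_eq_pow_val]
  have htr : ∀ k : ℕ, trace (Zm ^ k) = trace ((Amat ((p:ℕ):ℚ)) ^ k) := by
    intro k
    rw [hpow k, trace_units_conj]
    rfl
  have hdet : det Zm = 1 := by
    have := hpow 1
    rw [pow_one] at this
    rw [this, det_mul, det_mul]
    rw [mul_comm, ← mul_assoc, ← det_mul, ← Units.val_mul, inv_mul_cancel]
    simp [Aunit, detA hp0]
  -- block structure
  have hblock := comm_block hq0 hqsq Zm hMc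
  set a := Zm (.inl 0) (.inl 0)
  set b := Zm (.inl 1) (.inl 0)
  set c := Zm (.inr 0) (.inr 0)
  set d := Zm (.inr 1) (.inr 0)
  -- trace identities
  have h1 : (a + a) + (c + c) = 0 := by
    have := htr 1
    rw [pow_one, pow_one, hblock, trW, trA] at this
    exact this
  have h2 : 2*(a^2 + ((q:ℕ):ℚ)*b^2) + 2*(c^2 + ((q:ℕ):ℚ)⁻¹*d^2)
      = 2*((p:ℕ):ℚ) + 2*((p:ℕ):ℚ)⁻¹ := by
    have := htr 2
    rw [pow_two, pow_two, hblock, trW2, trA2] at this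
    exact this
  have h3 : 2*(a^3 + 3*((q:ℕ):ℚ)*a*b^2) + 2*(c^3 + 3*((q:ℕ):ℚ)⁻¹*c*d^2) = 0 := by
    have := htr 3
    rw [show (3:ℕ) = 2 + 1 by rfl, pow_succ, pow_succ, pow_one, pow_succ, pow_succ, pow_one,
      hblock, trW3, trA3] at this
    exact this
  have h5 : (a^2 - ((q:ℕ):ℚ)*b^2) * (c^2 - ((q:ℕ):ℚ)⁻¹*d^2) = 1 := by
    rw [← detW, ← hblock]
    exact hdet
  exact arith p.2 q.2 hne a b c d (by linarith) (by linarith) (by linarith) h5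

end Sp4Aux

/-- the symplectic group `Sp₄(ℚ)` has infinitely many z-classes. -/
theorem infinite_zClasses_Sp4_rat :
    (zClasses ↥(formGroup
      (Matrix.fromBlocks 0 1 (-1) 0 :
        Matrix (Fin 2 ⊕ Fin 2) (Fin 2 ⊕ Fin 2) ℚ))).Infinite := by
  apply Set.infinite_of_injective_forall_mem
    (f := fun p : Nat.Primes => {h | zEquiv (Sp4Aux.gP p) h})
  case hi =>
    intro p q h
    by_contra hne
    have hne' : (p:ℕ) ≠ (q:ℕ) := fun hh => hne (Subtype.ext hh)
    have h' : {h | zEquiv (Sp4Aux.gP p) h} = {h | zEquiv (Sp4Aux.gP q) h} := h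
    have hmem : Sp4Aux.gP q ∈ {h | zEquiv (Sp4Aux.gP p) h} := by
      rw [h']; exact Sp4Aux.zEquiv_refl _
    exact Sp4Aux.not_zEquiv_gP hne' hmem
  case hf =>
    intro p
    exact ⟨Sp4Aux.gP p, rfl⟩
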